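/- arXiv:2605.26218 — 4 statements merged into one kernel-verified Lean document; each statement's English description precedes it below -/
import Mathlib

section
/- Let d ≥ 1, let n ≥ 1, and let γ : Fin (2n) → Matrix (Fin d) (Fin d) ℂ satisfy γ_a * γ_b + γ_b * γ_a = 0 for all a ≠ b and γ_a * γ_a = 1 for all a. Let ρ : Matrix (Fin d) (Fin d) ℂ with trace ρ = 1, and let K = ∑_{a=1}^{2n} γ_a ⊗ₖ γ_a. Then trace( (1/2) • (K * K) * (ρ ⊗ₖ ρ) ) = n − ∑_{a < b} ( trace( (−i) • (γ_a * γ_b * ρ) ) )², where the sum runs over pairs a < b in Fin (2n). (In particular, writing Γ_{ab} = trace((−i)·γ_a γ_b ρ), the Bell observable F̂₁ = K²/2 satisfies tr(F̂₁ ρ⊗ρ) = n − ∑_{a<b} Γ_{ab}² = FAF₁(ρ).) -/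
open Kronecker Finset

/-- Unbiasedness of the two-copy Bell FAF estimator:
`tr(F̂₁ ρ⊗ρ) = n − ∑_{a<b} Γ_{ab}²` where `F̂₁ = K²/2`,
`K = ∑_a γ_a ⊗ₖ γ_a` and `Γ_{ab} = tr((−i) γ_a γ_b ρ)`. -/
theorem stmt_4 (d n : ℕ) (hd : 1 ≤ d) (hn : 1 ≤ n)
    (γ : Fin (2 * n) → Matrix (Fin d) (Fin d) ℂ)
    (hanti : ∀ a b, a ≠ b → γ a * γ b + γ b * γ a = 0)
    (hsq : ∀ a, γ a * γ a = 1)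
    (ρ : Matrix (Fin d) (Fin d) ℂ) (hρ : ρ.trace = 1) :
    Matrix.trace
        (((1 / 2 : ℂ) • ((∑ a, γ a ⊗ₖ γ a) * (∑ a, γ a ⊗ₖ γ a))) * (ρ ⊗ₖ ρ)) =
      (n : ℂ) -
        ∑ p ∈ Finset.univ.filter
            (fun p : Fin (2 * n) × Fin (2 * n) => p.1 < p.2),
          (Matrix.trace ((-Complex.I) • (γ p.1 * γ p.2 * ρ))) ^ 2 := by
  set t : Fin (2 * n) → Fin (2 * n) → ℂ := fun a b => (γ a * γ b * ρ).trace with ht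
  -- antisymmetry of t for a ≠ b
  have tanti : ∀ a b : Fin (2 * n), a ≠ b → t a b = - t b a := by
    intro a b hab
    have h : γ a * γ b = -(γ b * γ a) := eq_neg_of_add_eq_zero_left (hanti a b hab)
    simp [ht, h, Matrix.trace_neg, neg_mul]
  -- LHS computation
  have hLHS : Matrix.trace
      (((1 / 2 : ℂ) • ((∑ a, γ a ⊗ₖ γ a) * (∑ a, γ a ⊗ₖ γ a))) * (ρ ⊗ₖ ρ)) =
      (1 / 2 : ℂ) * ∑ a, ∑ b, (t a b) ^ 2 := by
    rw [Matrix.smul_mul, Matrix.trace_smul, smul_eq_mul]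
    congr 1
    rw [Finset.sum_mul_sum]
    rw [Finset.sum_mul, Matrix.trace_sum]
    refine Finset.sum_congr rfl fun a _ => ?_
    rw [Finset.sum_mul, Matrix.trace_sum]
    refine Finset.sum_congr rfl fun b _ => ?_
    rw [← Matrix.mul_kronecker_mul, ← Matrix.mul_kronecker_mul, Matrix.trace_kronecker]
    simp [ht, Matrix.mul_assoc, sq]
  rw [hLHS]
  -- RHS: trace((-I)•X)^2 = - t^2
  have hRHS : ∀ p : Fin (2 * n) × Fin (2 * n),
      (Matrix.trace ((-Complex.I) • (γ p.1 * γ p.2 * ρ))) ^ 2 = - (t p.1 p.2) ^ 2 := by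
    intro p
    rw [Matrix.trace_smul, smul_eq_mul, mul_pow]
    have : (-Complex.I) ^ 2 = -1 := by
      simp [sq]
    rw [this]; ring
  rw [Finset.sum_congr rfl fun p _ => hRHS p, Finset.sum_neg_distrib, sub_neg_eq_add]
  -- split the double sum
  have hsplit : ∑ a, ∑ b, (t a b) ^ 2
      = 2 * (n : ℂ) + 2 * ∑ p ∈ Finset.univ.filter
          (fun p : Fin (2 * n) × Fin (2 * n) => p.1 < p.2), (t p.1 p.2) ^ 2 := by
    rw [← Finset.sum_product']
    have hdecomp : ((Finset.univ : Finset (Fin (2 * n))) ×ˢ Finset.univ)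
        = (Finset.univ.filter fun p => p.1 < p.2)
          ∪ ((Finset.univ.filter fun p => p.1 = p.2)
          ∪ (Finset.univ.filter fun p => p.2 < p.1)) := by
      ext p
      simp only [Finset.mem_union, Finset.mem_filter, Finset.mem_univ, true_and,
        Finset.mem_product, and_self]
      constructor
      · intro _; rcases lt_trichotomy p.1 p.2 with h | h | h <;> tauto
      · intro _; trivial
    rw [hdecomp, Finset.sum_union, Finset.sum_union]
    · have hdiag : ∑ p ∈ (Finset.univ.filter fun p : Fin (2 * n) × Fin (2 * n) => p.1 = p.2),
          (t p.1 p.2) ^ 2 = 2 * (n : ℂ) := by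
        rw [Finset.sum_filter]
        have : ∀ p : Fin (2 * n) × Fin (2 * n),
            (if p.1 = p.2 then (t p.1 p.2)^2 else 0)
            = if p.1 = p.2 then 1 else 0 := by
          intro p
          split_ifs with h
          · rw [h]; simp [ht, hsq, hρ]
          · rfl
        rw [Finset.sum_congr rfl fun p _ => this p, Fintype.sum_prod_type]
        simp [Finset.sum_ite_eq]
      have hgt : ∑ p ∈ (Finset.univ.filter fun p : Fin (2 * n) × Fin (2 * n) => p.2 < p.1),
          (t p.1 p.2) ^ 2
          = ∑ p ∈ (Finset.univ.filter fun p : Fin (2 * n) × Fin (2 * n) => p.1 < p.2),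
          (t p.1 p.2) ^ 2 := by
        refine Finset.sum_nbij' (fun p => (p.2, p.1)) (fun p => (p.2, p.1)) ?_ ?_ ?_ ?_ ?_
        · intro p hp; simp only [Finset.mem_filter, Finset.mem_univ, true_and] at hp ⊢; exact hp
        · intro p hp; simp only [Finset.mem_filter, Finset.mem_univ, true_and] at hp ⊢; exact hp
        · intro p _; rfl
        · intro p _; rfl
        · intro p hp
          simp only [Finset.mem_filter, Finset.mem_univ, true_and] at hp
          rw [tanti p.1 p.2 (ne_of_gt hp)]
          ring
      rw [hdiag, hgt]
      ring
    · rw [Finset.disjoint_left]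
      intro p hp hq
      simp only [Finset.mem_filter, Finset.mem_univ, true_and] at hp hq
      rw [hp] at hq
      exact lt_irrefl _ hq
    · rw [Finset.disjoint_left]
      intro p hp hq
      simp only [Finset.mem_union, Finset.mem_filter, Finset.mem_univ, true_and] at hp hq
      rcases hq with h | h
      · rw [h] at hp; exact lt_irrefl _ hp
      · exact lt_asymm hp h
  rw [hsplit]
  ring
end

section
/- Let n ≥ 2 and let q : Fin n → ℝ satisfy 0 < q_j < 1 for all j. For x : Fin n → Bool define Λ(x) = ∏_{j} (if x_j then q_j else (1 − q_j)). Suppose there exist a string x₀ and a real λ₀ such that Λ(x) = λ₀ for every x ≠ x₀. Then q_j = 1/2 for every j (and hence all 2^n values Λ(x) are equal). -/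
open Finset

/-- Spectral rigidity of product thermal states: if the eigenvalue function
`Λ(x) = ∏_j q_j^{x_j}(1−q_j)^{1−x_j}` takes a common value on all strings
`x ≠ x₀`, then every `q_j = 1/2`. -/
theorem stmt_11 (n : ℕ) (hn : 2 ≤ n) (q : Fin n → ℝ)
    (hq0 : ∀ j, 0 < q j) (hq1 : ∀ j, q j < 1)
    (x₀ : Fin n → Bool) (lam₀ : ℝ)
    (h : ∀ x : Fin n → Bool, x ≠ x₀ →
      (∏ j, if x j then q j else 1 - q j) = lam₀) :
    ∀ j, q j = 1 / 2 := by
  intro j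
  obtain ⟨k, hk⟩ : ∃ k : Fin n, k ≠ j := by
    apply Fintype.exists_ne_of_one_lt_card
    simpa using (show 1 < n by omega)
  set z := Function.update x₀ k (!x₀ k) with hz
  have hzk : z k = !x₀ k := by simp [hz]
  have hzne : ∀ b, Function.update z j b ≠ x₀ := by
    intro b hEq
    have := congrFun hEq k
    rw [Function.update_of_ne hk, hzk] at this
    simp at this
  have key : ∀ b : Bool,
      (∏ i, if Function.update z j b i then q i else 1 - q i)
        = (if b then q j else 1 - q j) *
          ∏ i ∈ {j}ᶜ, (if z i then q i else 1 - q i) := by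
    intro b
    rw [Fintype.prod_eq_mul_prod_compl j]
    congr 1
    · simp
    · apply Finset.prod_congr rfl
      intro i hi
      simp only [Finset.mem_compl, Finset.mem_singleton] at hi
      rw [Function.update_of_ne hi]
  have h1 := h _ (hzne true)
  have h2 := h _ (hzne false)
  rw [key true] at h1
  rw [key false] at h2
  simp only [if_true, if_false] at h1 h2
  have hP : 0 < ∏ i ∈ {j}ᶜ, (if z i then q i else 1 - q i) := by
    apply Finset.prod_pos
    intro i _
    split
    · exact hq0 i
    · linarith [hq1 i]
  have : q j = 1 - q j := by
    have := h1.trans h2.symm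
    exact mul_right_cancel₀ (ne_of_gt hP) this
  linarith
end

section
/- Let D ≥ 1, let B : Matrix (Fin D) (Fin D) ℂ be Hermitian with trace B = 0, let e ∈ ℂ^D be a fixed unit vector, and let μ be the Haar probability measure on the unitary group U(D) = Matrix.unitaryGroup (Fin D) ℂ. Then ∫ |⟨e, (U⋆ * B * U) e⟩|² dμ(U) = (∑_{i,j} |B_{ij}|²) / (D(D+1)), i.e. the Haar second moment of ⟨ψ|B|ψ⟩ over random pure states ψ = U e equals tr(B²)/(D(D+1)). -/
open MeasureTheory Finset Matrix

namespace Stmt12Aux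

variable {D : ℕ} [MeasurableSpace (Matrix.unitaryGroup (Fin D) ℂ)]
  [BorelSpace (Matrix.unitaryGroup (Fin D) ℂ)]

/-- the random state -/
noncomputable def ps (e : Fin D → ℂ) (U : Matrix.unitaryGroup (Fin D) ℂ) (a : Fin D) : ℂ :=
  ((U : Matrix (Fin D) (Fin D) ℂ) *ᵥ e) a

lemma ps_continuous (e : Fin D → ℂ) (a : Fin D) : Continuous (fun U => ps e U a) := by
  simp only [ps, mulVec, dotProduct]
  exact continuous_finset_sum _ fun j _ =>
    Continuous.mul (f := fun U : Matrix.unitaryGroup (Fin D) ℂ => (U : Matrix (Fin D) (Fin D) ℂ) a j)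
      (g := fun _ => e j)
      ((continuous_apply j).comp ((continuous_apply a).comp continuous_subtype_val))
      continuous_const

lemma ps_bound (e : Fin D → ℂ) (U : Matrix.unitaryGroup (Fin D) ℂ) (a : Fin D) :
    ‖ps e U a‖ ≤ ∑ j, ‖e j‖ := by
  simp only [ps, mulVec, dotProduct]
  refine (norm_sum_le _ _).trans (Finset.sum_le_sum fun j _ => ?_)
  rw [norm_mul]
  calc ‖(U : Matrix (Fin D) (Fin D) ℂ) a j‖ * ‖e j‖
      ≤ 1 * ‖e j‖ := by
        gcongr
        exact entry_norm_bound_of_unitary U.2 a j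
    _ = ‖e j‖ := one_mul _

/-- conservation of norm -/
lemma ps_norm (e : Fin D → ℂ) (he : ∑ i, ‖e i‖ ^ 2 = 1)
    (U : Matrix.unitaryGroup (Fin D) ℂ) :
    ∑ a, ps e U a * (starRingEnd ℂ) (ps e U a) = 1 := by
  have h1 : ∑ a, ps e U a * (starRingEnd ℂ) (ps e U a)
      = star (ps e U) ⬝ᵥ ps e U := by
    simp only [dotProduct, Pi.star_apply, starRingEnd_apply]
    exact Finset.sum_congr rfl fun a _ => (mul_comm _ _)
  rw [h1]
  show star ((U : Matrix (Fin D) (Fin D) ℂ) *ᵥ e) ⬝ᵥ ((U : Matrix (Fin D) (Fin D) ℂ) *ᵥ e) = 1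
  rw [star_mulVec, dotProduct_mulVec, vecMul_vecMul, ← star_eq_conjTranspose,
    UnitaryGroup.star_mul_self, vecMul_one]
  have : star e ⬝ᵥ e = ((∑ i, ‖e i‖ ^ 2 : ℝ) : ℂ) := by
    simp only [dotProduct, Pi.star_apply, RCLike.star_def]
    push_cast
    refine Finset.sum_congr rfl fun i _ => ?_
    rw [mul_comm, Complex.mul_conj, Complex.normSq_eq_norm_sq]
    push_cast; ring
  rw [this, he]; norm_num

end Stmt12Aux

namespace Stmt12Aux2
open Stmt12Aux
variable {D : ℕ} [MeasurableSpace (Matrix.unitaryGroup (Fin D) ℂ)]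
  [BorelSpace (Matrix.unitaryGroup (Fin D) ℂ)]

/-- the quartic monomial integrand -/
noncomputable def mono (e : Fin D → ℂ) (a b c d : Fin D)
    (U : Matrix.unitaryGroup (Fin D) ℂ) : ℂ :=
  ps e U a * ps e U b * (starRingEnd ℂ) (ps e U c) * (starRingEnd ℂ) (ps e U d)

lemma mono_continuous (e : Fin D → ℂ) (a b c d : Fin D) : Continuous (mono e a b c d) :=
  (((ps_continuous e a).mul (ps_continuous e b)).mul
    (Complex.continuous_conj.comp (ps_continuous e c))).mul
      (Complex.continuous_conj.comp (ps_continuous e d))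

lemma mono_bound (e : Fin D → ℂ) (a b c d : Fin D) (U : Matrix.unitaryGroup (Fin D) ℂ) :
    ‖mono e a b c d U‖ ≤ (∑ j, ‖e j‖) * (∑ j, ‖e j‖) * (∑ j, ‖e j‖) * (∑ j, ‖e j‖) := by
  have h0 : ∀ j : Fin D, (0:ℝ) ≤ ‖e j‖ := fun j => norm_nonneg _
  have hC : (0:ℝ) ≤ ∑ j, ‖e j‖ := Finset.sum_nonneg fun j _ => h0 j
  simp only [mono, norm_mul, RCLike.norm_conj]
  gcongr <;> exact ps_bound e U _

lemma integrable_mono (μ : Measure (Matrix.unitaryGroup (Fin D) ℂ)) [IsFiniteMeasure μ]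
    (e : Fin D → ℂ) (a b c d : Fin D) : Integrable (mono e a b c d) μ :=
  (integrable_const _).mono' (mono_continuous e a b c d).aestronglyMeasurable
    (Filter.Eventually.of_forall (mono_bound e a b c d))

/-- the fourth-moment tensor -/
noncomputable def T4 (μ : Measure (Matrix.unitaryGroup (Fin D) ℂ)) (e : Fin D → ℂ)
    (a b c d : Fin D) : ℂ :=
  ∫ U, mono e a b c d U ∂μ

lemma T4_swap12 (μ : Measure (Matrix.unitaryGroup (Fin D) ℂ)) (e : Fin D → ℂ)
    (a b c d : Fin D) : T4 μ e a b c d = T4 μ e b a c d := by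
  unfold T4 mono; congr 1; funext U; ring

lemma T4_swap34 (μ : Measure (Matrix.unitaryGroup (Fin D) ℂ)) (e : Fin D → ℂ)
    (a b c d : Fin D) : T4 μ e a b c d = T4 μ e a b d c := by
  unfold T4 mono; congr 1; funext U; ring

/-- invariance under left translation by a fixed unitary -/
lemma T4_left_inv (μ : Measure (Matrix.unitaryGroup (Fin D) ℂ))
    [μ.IsHaarMeasure] (e : Fin D → ℂ) (V : Matrix.unitaryGroup (Fin D) ℂ) (a b c d : Fin D) :
    T4 μ e a b c d = ∫ U, mono e a b c d (V * U) ∂μ :=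
  (integral_mul_left_eq_self (mono e a b c d) V).symm

lemma ps_mul (e : Fin D → ℂ) (V U : Matrix.unitaryGroup (Fin D) ℂ) (a : Fin D) :
    ps e (V * U) a = ((V : Matrix (Fin D) (Fin D) ℂ) *ᵥ (ps e U)) a := by
  unfold ps
  rw [MulMemClass.coe_mul, ← mulVec_mulVec]

/-- phase (diagonal unitary) invariance -/
lemma T4_diag_inv (μ : Measure (Matrix.unitaryGroup (Fin D) ℂ))
    [μ.IsHaarMeasure] (e : Fin D → ℂ) (z : Fin D → ℂ)
    (hz : ∀ i, (starRingEnd ℂ) (z i) * z i = 1) (a b c d : Fin D) :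
    T4 μ e a b c d =
      z a * z b * (starRingEnd ℂ) (z c) * (starRingEnd ℂ) (z d) * T4 μ e a b c d := by
  have hVmem : Matrix.diagonal z ∈ Matrix.unitaryGroup (Fin D) ℂ := by
    rw [Matrix.mem_unitaryGroup_iff', star_eq_conjTranspose, diagonal_conjTranspose,
      diagonal_mul_diagonal]
    ext i j
    by_cases h : i = j
    · subst h
      simp only [Matrix.diagonal_apply_eq, Matrix.one_apply_eq, Pi.mul_apply, Pi.star_apply,
        RCLike.star_def]
      exact hz i
    · simp [Matrix.diagonal_apply_ne _ h, Matrix.one_apply_ne h]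
  set V : Matrix.unitaryGroup (Fin D) ℂ := ⟨Matrix.diagonal z, hVmem⟩
  have key : ∀ U, mono e a b c d (V * U) =
      z a * z b * (starRingEnd ℂ) (z c) * (starRingEnd ℂ) (z d) * mono e a b c d U := by
    intro U
    have hps : ∀ x, ps e (V * U) x = z x * ps e U x := by
      intro x; rw [ps_mul]; simp [V, mulVec_diagonal]
    simp only [mono, hps, _root_.map_mul]
    ring
  conv_lhs => rw [T4_left_inv μ e V a b c d]
  simp only [key]
  rw [integral_const_mul]
  rfl

end Stmt12Aux2

namespace Stmt12Aux3
open Stmt12Aux Stmt12Aux2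

lemma eq_zero_of_self_eq_mul {t c : ℂ} (h : t = c * t) (hc : c ≠ 1) : t = 0 := by
  have h0 : (c - 1) * t = 0 := by linear_combination -h
  rcases mul_eq_zero.mp h0 with h' | h'
  · exact absurd (by linear_combination h') hc
  · exact h'

variable {D : ℕ} [MeasurableSpace (Matrix.unitaryGroup (Fin D) ℂ)]
  [BorelSpace (Matrix.unitaryGroup (Fin D) ℂ)]

lemma hz_if (m : Fin D) :
    ∀ i, (starRingEnd ℂ) ((fun i => if i = m then Complex.I else 1) i) *
      (fun i => if i = m then Complex.I else 1) i = 1 := by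
  intro i
  by_cases h : i = m <;> simp [h, Complex.conj_I]

lemma T4_vanish (μ : Measure (Matrix.unitaryGroup (Fin D) ℂ)) [μ.IsHaarMeasure]
    (e : Fin D → ℂ) {a b c d : Fin D}
    (h1 : ¬(a = c ∧ b = d)) (h2 : ¬(a = d ∧ b = c)) : T4 μ e a b c d = 0 := by
  rcases not_and_or.mp h1 with hac | hbd <;> rcases not_and_or.mp h2 with had | hbc
  · -- a ≠ c, a ≠ d : use m = a
    have key := T4_diag_inv μ e _ (hz_if a) a b c d
    simp only [eq_self_iff_true, if_true, if_pos rfl, if_neg (Ne.symm hac), if_neg (Ne.symm had), _root_.map_one, mul_one] at key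
    by_cases hba : b = a
    · rw [if_pos hba] at key
      exact eq_zero_of_self_eq_mul key (by norm_num [Complex.ext_iff])
    · rw [if_neg hba, mul_one] at key
      exact eq_zero_of_self_eq_mul key (by norm_num [Complex.ext_iff])
  · -- a ≠ c, b ≠ c : use m = c
    have key := T4_diag_inv μ e _ (hz_if c) a b c d
    simp only [eq_self_iff_true, if_true, if_pos rfl, if_neg hac, if_neg hbc, Complex.conj_I, mul_one, one_mul] at key
    by_cases hdc : d = c
    · rw [if_pos hdc] at key
      simp only [Complex.conj_I] at key
      exact eq_zero_of_self_eq_mul key (by norm_num [Complex.ext_iff])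
    · rw [if_neg hdc, _root_.map_one, mul_one] at key
      exact eq_zero_of_self_eq_mul key (by norm_num [Complex.ext_iff])
  · -- b ≠ d, a ≠ d : use m = d
    have key := T4_diag_inv μ e _ (hz_if d) a b c d
    simp only [eq_self_iff_true, if_true, if_pos rfl, if_neg had, if_neg hbd, Complex.conj_I, mul_one, one_mul] at key
    by_cases hcd : c = d
    · rw [if_pos hcd] at key
      simp only [Complex.conj_I] at key
      exact eq_zero_of_self_eq_mul key (by norm_num [Complex.ext_iff])
    · rw [if_neg hcd, _root_.map_one, one_mul] at key
      exact eq_zero_of_self_eq_mul key (by norm_num [Complex.ext_iff])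
  · -- b ≠ d, b ≠ c : use m = b
    have key := T4_diag_inv μ e _ (hz_if b) a b c d
    simp only [eq_self_iff_true, if_true, if_pos rfl, if_neg (Ne.symm hbc), if_neg (Ne.symm hbd), _root_.map_one, mul_one] at key
    by_cases hab : a = b
    · rw [if_pos hab] at key
      exact eq_zero_of_self_eq_mul key (by norm_num [Complex.ext_iff])
    · rw [if_neg hab, one_mul] at key
      exact eq_zero_of_self_eq_mul key (by norm_num [Complex.ext_iff])

end Stmt12Aux3

namespace Stmt12Aux4
open Stmt12Aux Stmt12Aux2 Stmt12Aux3

variable {D : ℕ} [MeasurableSpace (Matrix.unitaryGroup (Fin D) ℂ)]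
  [BorelSpace (Matrix.unitaryGroup (Fin D) ℂ)]

/-- integral of a finite combination of monomials -/
lemma integral_finsum_mono (μ : Measure (Matrix.unitaryGroup (Fin D) ℂ)) [IsFiniteMeasure μ]
    (e : Fin D → ℂ) {ι : Type*} (s : Finset ι) (co : ι → ℂ) (f g h k : ι → Fin D) :
    ∫ U, ∑ x ∈ s, co x * mono e (f x) (g x) (h x) (k x) U ∂μ =
      ∑ x ∈ s, co x * T4 μ e (f x) (g x) (h x) (k x) := by
  rw [integral_finset_sum]
  · exact Finset.sum_congr rfl fun x _ => integral_const_mul _ _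
  · exact fun x _ => (integrable_mono μ e _ _ _ _).const_mul _

noncomputable def rr : ℂ := ((Real.sqrt 2)⁻¹ : ℝ)

lemma conj_rr : (starRingEnd ℂ) rr = rr := Complex.conj_ofReal _

lemma rr_sq : rr * rr = 1/2 := by
  unfold rr
  rw [← Complex.ofReal_mul, ← mul_inv, Real.mul_self_sqrt (by norm_num)]
  norm_num

/-- Hadamard-type rotation in the (a,b) plane -/
noncomputable def Wm (a b : Fin D) : Matrix (Fin D) (Fin D) ℂ := Matrix.of fun i j =>
  if i = a then (if j = a then rr else if j = b then rr else 0)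
  else if i = b then (if j = a then rr else if j = b then -rr else 0)
  else if i = j then 1 else 0

lemma Wm_mem (a b : Fin D) (hab : a ≠ b) : Wm a b ∈ Matrix.unitaryGroup (Fin D) ℂ := by
  rw [Matrix.mem_unitaryGroup_iff']
  ext i j
  rw [Matrix.mul_apply]
  have hterm : ∀ k, (star (Wm a b)) i k * (Wm a b) k j
      = (starRingEnd ℂ) ((Wm a b) k i) * (Wm a b) k j := by
    intro k
    rw [Matrix.star_eq_conjTranspose, Matrix.conjTranspose_apply]
    rfl
  simp only [hterm]
  have ha : a ∈ (Finset.univ : Finset (Fin D)) := Finset.mem_univ a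
  rw [← Finset.add_sum_erase _ _ ha]
  have hb : b ∈ Finset.univ.erase a := Finset.mem_erase.mpr ⟨hab.symm, Finset.mem_univ b⟩
  rw [← Finset.add_sum_erase _ _ hb]
  have htail : ∑ k ∈ (Finset.univ.erase a).erase b,
      (starRingEnd ℂ) ((Wm a b) k i) * (Wm a b) k j
      = ∑ k ∈ (Finset.univ.erase a).erase b,
          (if k = i then (if i = j then 1 else 0) else 0) := by
    refine Finset.sum_congr rfl fun k hk => ?_
    obtain ⟨hkb, hka, -⟩ :  k ≠ b ∧ k ≠ a ∧ True := by
      have h1 := Finset.mem_erase.mp hk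
      have h2 := Finset.mem_erase.mp h1.2
      exact ⟨h1.1, h2.1, trivial⟩
    simp only [Wm, Matrix.of_apply, if_neg hka, if_neg hkb]
    by_cases hki : k = i
    · subst hki
      by_cases hkj : k = j <;> simp [hkj]
    · simp [hki]
  rw [htail, Finset.sum_ite_eq' ((Finset.univ.erase a).erase b) i]
  have hmem : (i ∈ (Finset.univ.erase a).erase b) = (¬i = b ∧ ¬i = a) := by
    simp [Finset.mem_erase]
  by_cases hia : i = a <;> by_cases hib : i = b <;> by_cases hja : j = a <;>
      by_cases hjb : j = b <;>
    simp_all [Wm, Matrix.one_apply, conj_rr, hab, Ne.symm hab] <;>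
    first
      | ring1
      | linear_combination (2:ℂ) * rr_sq
      | linear_combination rr_sq
      | linear_combination -rr_sq
      | linear_combination -(2:ℂ) * rr_sq
      | simp [Ne.symm hja]
      | simp [Ne.symm hjb]
      | simp [Ne.symm hia]
      | simp [Ne.symm hib]

end Stmt12Aux4

namespace Stmt12Aux5
open Stmt12Aux Stmt12Aux2 Stmt12Aux3 Stmt12Aux4

variable {D : ℕ} [MeasurableSpace (Matrix.unitaryGroup (Fin D) ℂ)]
  [BorelSpace (Matrix.unitaryGroup (Fin D) ℂ)]

lemma rr_pow4 : rr^4 = 1/4 := by linear_combination (rr*rr + 1/2) * rr_sq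

lemma Wm_row_a (a b : Fin D) (hab : a ≠ b) (v : Fin D → ℂ) :
    (Wm a b *ᵥ v) a = rr * v a + rr * v b := by
  have hbmem : b ∈ Finset.univ.erase a := Finset.mem_erase.mpr ⟨hab.symm, Finset.mem_univ b⟩
  have htail : ∑ k ∈ (Finset.univ.erase a).erase b, Wm a b a k * v k = 0 := by
    refine Finset.sum_eq_zero fun k hk => ?_
    have h1 := Finset.mem_erase.mp hk
    have h2 := Finset.mem_erase.mp h1.2
    have hka : ¬ k = a := h2.1
    have hkb : ¬ k = b := h1.1
    simp [Wm, hka, hkb]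
  have hcalc : (Wm a b *ᵥ v) a = ∑ k, Wm a b a k * v k := rfl
  rw [hcalc, ← Finset.add_sum_erase _ _ (Finset.mem_univ a), ← Finset.add_sum_erase _ _ hbmem,
    htail, add_zero]
  simp [Wm, hab, Ne.symm hab]

lemma Wm_row_b (a b : Fin D) (hab : a ≠ b) (v : Fin D → ℂ) :
    (Wm a b *ᵥ v) b = rr * v a - rr * v b := by
  have hbmem : b ∈ Finset.univ.erase a := Finset.mem_erase.mpr ⟨hab.symm, Finset.mem_univ b⟩
  have htail : ∑ k ∈ (Finset.univ.erase a).erase b, Wm a b b k * v k = 0 := by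
    refine Finset.sum_eq_zero fun k hk => ?_
    have h1 := Finset.mem_erase.mp hk
    have h2 := Finset.mem_erase.mp h1.2
    have hka : ¬ k = a := h2.1
    have hkb : ¬ k = b := h1.1
    simp [Wm, hka, hkb, Ne.symm hab]
  have hcalc : (Wm a b *ᵥ v) b = ∑ k, Wm a b b k * v k := rfl
  rw [hcalc, ← Finset.add_sum_erase _ _ (Finset.mem_univ a), ← Finset.add_sum_erase _ _ hbmem,
    htail, add_zero]
  simp [Wm, hab, Ne.symm hab]
  ring

section
variable (μ : Measure (Matrix.unitaryGroup (Fin D) ℂ)) [μ.IsHaarMeasure] [IsProbabilityMeasure μ]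
  (e : Fin D → ℂ)

lemma had_expand_a (a b : Fin D) (hab : a ≠ b) :
    T4 μ e a a a a = ∑ x : Bool × Bool × Bool × Bool,
      rr^4 * T4 μ e (cond x.1 a b) (cond x.2.1 a b) (cond x.2.2.1 a b) (cond x.2.2.2 a b) := by
  set V : Matrix.unitaryGroup (Fin D) ℂ := ⟨Wm a b, Wm_mem a b hab⟩ with hV
  have h1 : T4 μ e a a a a = ∫ U, mono e a a a a (V * U) ∂μ := T4_left_inv μ e V a a a a
  have h2 : (fun U => mono e a a a a (V * U)) = fun U => ∑ x : Bool × Bool × Bool × Bool,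
      rr^4 * mono e (cond x.1 a b) (cond x.2.1 a b) (cond x.2.2.1 a b) (cond x.2.2.2 a b) U := by
    funext U
    have hpa : ps e (V * U) a = rr * ps e U a + rr * ps e U b := by
      rw [ps_mul]; exact Wm_row_a a b hab (ps e U)
    simp only [mono, hpa, map_add, _root_.map_mul, conj_rr, Fintype.sum_prod_type,
      Fintype.sum_bool, cond_true, cond_false]
    ring
  rw [h1, h2]
  exact integral_finsum_mono μ e Finset.univ _ _ _ _ _

lemma had_expand_b (a b : Fin D) (hab : a ≠ b) :
    T4 μ e b b b b = ∑ x : Bool × Bool × Bool × Bool,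
      (rr^4 * (cond x.1 1 (-1)) * (cond x.2.1 1 (-1)) * (cond x.2.2.1 1 (-1))
        * (cond x.2.2.2 1 (-1))) *
        T4 μ e (cond x.1 a b) (cond x.2.1 a b) (cond x.2.2.1 a b) (cond x.2.2.2 a b) := by
  set V : Matrix.unitaryGroup (Fin D) ℂ := ⟨Wm a b, Wm_mem a b hab⟩ with hV
  have h1 : T4 μ e b b b b = ∫ U, mono e b b b b (V * U) ∂μ := T4_left_inv μ e V b b b b
  have h2 : (fun U => mono e b b b b (V * U)) = fun U => ∑ x : Bool × Bool × Bool × Bool,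
      (rr^4 * (cond x.1 1 (-1)) * (cond x.2.1 1 (-1)) * (cond x.2.2.1 1 (-1))
        * (cond x.2.2.2 1 (-1))) *
        mono e (cond x.1 a b) (cond x.2.1 a b) (cond x.2.2.1 a b) (cond x.2.2.2 a b) U := by
    funext U
    have hpb : ps e (V * U) b = rr * ps e U a - rr * ps e U b := by
      rw [ps_mul]; exact Wm_row_b a b hab (ps e U)
    simp only [mono, hpb, map_sub, _root_.map_mul, conj_rr, Fintype.sum_prod_type,
      Fintype.sum_bool, cond_true, cond_false]
    ring
  rw [h1, h2]
  exact integral_finsum_mono μ e Finset.univ _ _ _ _ _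

lemma T4_s_eq_and_off (a b : Fin D) (hab : a ≠ b) :
    T4 μ e a a a a = T4 μ e b b b b ∧ 2 * T4 μ e a b a b = T4 μ e a a a a := by
  have hv : ∀ p q u v : Fin D, ¬(p = u ∧ q = v) → ¬(p = v ∧ q = u) → T4 μ e p q u v = 0 :=
    fun _ _ _ _ => T4_vanish μ e
  have HA := had_expand_a μ e a b hab
  have HB := had_expand_b μ e a b hab
  simp only [Fintype.sum_prod_type, Fintype.sum_bool, cond_true, cond_false] at HA HB
  rw [hv a a a b (by simp [hab, hab.symm]) (by simp [hab, hab.symm]), hv a a b a (by simp [hab, hab.symm]) (by simp [hab, hab.symm]),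
    hv a a b b (by simp [hab, hab.symm]) (by simp [hab, hab.symm]), hv a b a a (by simp [hab, hab.symm]) (by simp [hab, hab.symm]),
    hv a b b b (by simp [hab, hab.symm]) (by simp [hab, hab.symm]), hv b a a a (by simp [hab, hab.symm]) (by simp [hab, hab.symm]),
    hv b a b b (by simp [hab, hab.symm]) (by simp [hab, hab.symm]), hv b b a a (by simp [hab, hab.symm]) (by simp [hab, hab.symm]),
    hv b b a b (by simp [hab, hab.symm]) (by simp [hab, hab.symm]), hv b b b a (by simp [hab, hab.symm]) (by simp [hab, hab.symm])]
    at HA HB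
  rw [show T4 μ e a b b a = T4 μ e a b a b from T4_swap34 μ e a b b a,
    show T4 μ e b a a b = T4 μ e a b a b from T4_swap12 μ e b a a b,
    show T4 μ e b a b a = T4 μ e a b b a from T4_swap12 μ e b a b a,
    show T4 μ e a b b a = T4 μ e a b a b from T4_swap34 μ e a b b a] at HA HB
  constructor
  · linear_combination HA - HB
  · linear_combination (-3/2 : ℂ) * HA + (-1/2 : ℂ) * HB +
      (-2 * (T4 μ e a a a a + T4 μ e b b b b + 4 * T4 μ e a b a b)) * rr_pow4

end
end Stmt12Aux5

namespace Stmt12Aux6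
open Stmt12Aux Stmt12Aux2 Stmt12Aux3 Stmt12Aux4 Stmt12Aux5

variable {D : ℕ} [MeasurableSpace (Matrix.unitaryGroup (Fin D) ℂ)]
  [BorelSpace (Matrix.unitaryGroup (Fin D) ℂ)]
  (μ : Measure (Matrix.unitaryGroup (Fin D) ℂ)) [μ.IsHaarMeasure] [IsProbabilityMeasure μ]
  (e : Fin D → ℂ)

lemma T4_norm_sum (he : ∑ i, ‖e i‖ ^ 2 = 1) :
    ∑ p : Fin D × Fin D, T4 μ e p.1 p.2 p.1 p.2 = 1 := by
  have h1 : ∀ U, ∑ p : Fin D × Fin D, mono e p.1 p.2 p.1 p.2 U = 1 := by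
    intro U
    have h2 := ps_norm e he U
    calc ∑ p : Fin D × Fin D, mono e p.1 p.2 p.1 p.2 U
        = ∑ a, ∑ b, (ps e U a * (starRingEnd ℂ) (ps e U a)) *
            (ps e U b * (starRingEnd ℂ) (ps e U b)) := by
          rw [Fintype.sum_prod_type]
          exact Finset.sum_congr rfl fun a _ => Finset.sum_congr rfl fun b _ => by
            unfold mono; ring
      _ = (∑ a, ps e U a * (starRingEnd ℂ) (ps e U a)) *
            (∑ b, ps e U b * (starRingEnd ℂ) (ps e U b)) := by
          rw [Finset.sum_mul_sum]
      _ = 1 := by rw [h2, one_mul]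
  have h3 : ∑ p : Fin D × Fin D, (1:ℂ) * T4 μ e p.1 p.2 p.1 p.2
      = ∫ U, ∑ p : Fin D × Fin D, (1:ℂ) * mono e p.1 p.2 p.1 p.2 U ∂μ :=
    (integral_finsum_mono μ e Finset.univ _ _ _ _ _).symm
  simp only [one_mul] at h3
  rw [h3]
  simp only [h1]
  simp

variable (hD : 1 ≤ D)

/-- the diagonal value of the moment tensor -/
noncomputable def kap : ℂ := T4 μ e ⟨0, hD⟩ ⟨0, hD⟩ ⟨0, hD⟩ ⟨0, hD⟩

lemma T4_diag_const (a : Fin D) : T4 μ e a a a a = kap μ e hD := by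
  by_cases h : a = ⟨0, hD⟩
  · rw [h]; rfl
  · exact (T4_s_eq_and_off μ e ⟨0, hD⟩ a (Ne.symm h)).1.symm

lemma T4_off_diag (a b : Fin D) (hab : a ≠ b) : T4 μ e a b a b = kap μ e hD / 2 := by
  have h := (T4_s_eq_and_off μ e a b hab).2
  rw [T4_diag_const μ e hD a] at h
  linear_combination h / 2

lemma T4_struct (a b c d : Fin D) :
    T4 μ e a b c d = (kap μ e hD / 2) *
      ((if a = c then (1:ℂ) else 0) * (if b = d then (1:ℂ) else 0) +
       (if a = d then (1:ℂ) else 0) * (if b = c then (1:ℂ) else 0)) := by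
  by_cases h1 : a = c ∧ b = d
  · obtain ⟨rfl, rfl⟩ : a = c ∧ b = d := h1
    by_cases hab : a = b
    · subst hab
      rw [T4_diag_const μ e hD a]
      norm_num
    · rw [T4_off_diag μ e hD a b hab, if_pos rfl, if_pos rfl, if_neg hab, if_neg (Ne.symm hab)]
      ring
  · by_cases h2 : a = d ∧ b = c
    · obtain ⟨rfl, rfl⟩ : a = d ∧ b = c := h2
      have hab : a ≠ b := by
        intro h; exact h1 ⟨h ▸ rfl, h ▸ rfl⟩
      rw [show T4 μ e a b b a = T4 μ e a b a b from T4_swap34 μ e a b b a,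
        T4_off_diag μ e hD a b hab, if_pos rfl, if_pos rfl, if_neg hab, if_neg (Ne.symm hab)]
      ring
    · rw [T4_vanish μ e h1 h2]
      have e1 : (if a = c then (1:ℂ) else 0) * (if b = d then (1:ℂ) else 0) = 0 := by
        rcases not_and_or.mp h1 with h | h <;> simp [h]
      have e2 : (if a = d then (1:ℂ) else 0) * (if b = c then (1:ℂ) else 0) = 0 := by
        rcases not_and_or.mp h2 with h | h <;> simp [h]
      rw [e1, e2]
      ring

lemma kap_val (he : ∑ i, ‖e i‖ ^ 2 = 1) :
    (kap μ e hD / 2) * ((D:ℂ) * D + D) = 1 := by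
  have hn := T4_norm_sum μ e he
  have hs : ∑ p : Fin D × Fin D, T4 μ e p.1 p.2 p.1 p.2
      = (kap μ e hD / 2) * ((D:ℂ) * D + D) := by
    have : ∀ p : Fin D × Fin D, T4 μ e p.1 p.2 p.1 p.2
        = (kap μ e hD / 2) * (1 + if p.1 = p.2 then (1:ℂ) else 0) := by
      intro p
      rw [T4_struct μ e hD p.1 p.2 p.1 p.2]
      by_cases h : p.1 = p.2 <;> simp [h, eq_comm]
    rw [Finset.sum_congr rfl fun p _ => this p, ← Finset.mul_sum]
    congr 1
    rw [Finset.sum_add_distrib]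
    have c1 : ∑ _p : Fin D × Fin D, (1:ℂ) = (D:ℂ) * D := by
      simp [Finset.card_univ, mul_comm]
    have c2 : ∑ p : Fin D × Fin D, (if p.1 = p.2 then (1:ℂ) else 0) = (D:ℂ) := by
      rw [Fintype.sum_prod_type]
      simp [Finset.sum_ite_eq]
    rw [c1, c2]
  rw [hs] at hn
  exact hn

end Stmt12Aux6

open Stmt12Aux Stmt12Aux2 Stmt12Aux3 Stmt12Aux4 Stmt12Aux5 Stmt12Aux6 in
/-- Haar second moment of a traceless Hermitian observable over random pure
states: `∫ |⟨e| U† B U |e⟩|² dμ(U) = tr(B²)/(D(D+1)) = (∑_{ij}|B_{ij}|²)/(D(D+1))`. -/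
theorem stmt_12 (D : ℕ) (hD : 1 ≤ D)
    [MeasurableSpace (Matrix.unitaryGroup (Fin D) ℂ)]
    [BorelSpace (Matrix.unitaryGroup (Fin D) ℂ)]
    (μ : Measure (Matrix.unitaryGroup (Fin D) ℂ))
    [μ.IsHaarMeasure] [IsProbabilityMeasure μ]
    (B : Matrix (Fin D) (Fin D) ℂ) (hB : B.IsHermitian) (htr : B.trace = 0)
    (e : Fin D → ℂ) (he : ∑ i, ‖e i‖ ^ 2 = 1) :
    ∫ U : Matrix.unitaryGroup (Fin D) ℂ,
        ‖star e ⬝ᵥ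
          (((U : Matrix (Fin D) (Fin D) ℂ)ᴴ * B *
            (U : Matrix (Fin D) (Fin D) ℂ)) *ᵥ e)‖ ^ 2 ∂μ =
      (∑ i, ∑ j, ‖B i j‖ ^ 2) / (D * (D + 1)) := by
  classical
  -- expansion of the quadratic form in terms of ps
  have hFexp : ∀ U : Matrix.unitaryGroup (Fin D) ℂ,
      star e ⬝ᵥ (((U : Matrix (Fin D) (Fin D) ℂ)ᴴ * B * (U : Matrix (Fin D) (Fin D) ℂ)) *ᵥ e)
      = ∑ p : Fin D × Fin D, (starRingEnd ℂ) (ps e U p.1) * B p.1 p.2 * ps e U p.2 := by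
    intro U
    rw [← mulVec_mulVec, ← mulVec_mulVec, dotProduct_mulVec, ← star_mulVec]
    rw [Fintype.sum_prod_type]
    simp only [ps, dotProduct, mulVec, Pi.star_apply, RCLike.star_def, Finset.mul_sum]
    exact Finset.sum_congr rfl fun i _ => Finset.sum_congr rfl fun j _ =>
      Finset.sum_congr rfl fun k _ => by ring
  -- pointwise |F|² as a sum of monomials
  have hcomb : ∀ U : Matrix.unitaryGroup (Fin D) ℂ,
      ((‖star e ⬝ᵥ (((U : Matrix (Fin D) (Fin D) ℂ)ᴴ * B *
          (U : Matrix (Fin D) (Fin D) ℂ)) *ᵥ e)‖ ^ 2 : ℝ) : ℂ)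
      = ∑ q : (Fin D × Fin D) × (Fin D × Fin D),
          (B q.1.1 q.1.2 * (starRingEnd ℂ) (B q.2.1 q.2.2)) *
            mono e q.1.2 q.2.1 q.1.1 q.2.2 U := by
    intro U
    rw [Complex.sq_norm]
    rw [show ((Complex.normSq (star e ⬝ᵥ (((U : Matrix (Fin D) (Fin D) ℂ)ᴴ * B *
        (U : Matrix (Fin D) (Fin D) ℂ)) *ᵥ e)) : ℝ) : ℂ)
      = (star e ⬝ᵥ (((U : Matrix (Fin D) (Fin D) ℂ)ᴴ * B *
          (U : Matrix (Fin D) (Fin D) ℂ)) *ᵥ e)) *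
        (starRingEnd ℂ) (star e ⬝ᵥ (((U : Matrix (Fin D) (Fin D) ℂ)ᴴ * B *
          (U : Matrix (Fin D) (Fin D) ℂ)) *ᵥ e)) from (Complex.mul_conj _).symm]
    rw [hFexp U, map_sum, Finset.sum_mul_sum]
    conv_rhs => rw [Fintype.sum_prod_type]
    refine Finset.sum_congr rfl fun p _ => Finset.sum_congr rfl fun q _ => ?_
    simp only [mono, _root_.map_mul, Complex.conj_conj]
    ring
  -- the complex-valued integral
  have hint : ∫ U, ∑ q : (Fin D × Fin D) × (Fin D × Fin D),
      (B q.1.1 q.1.2 * (starRingEnd ℂ) (B q.2.1 q.2.2)) *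
        mono e q.1.2 q.2.1 q.1.1 q.2.2 U ∂μ
      = ∑ q : (Fin D × Fin D) × (Fin D × Fin D),
          (B q.1.1 q.1.2 * (starRingEnd ℂ) (B q.2.1 q.2.2)) *
            T4 μ e q.1.2 q.2.1 q.1.1 q.2.2 :=
    integral_finsum_mono μ e Finset.univ _ _ _ _ _
  have ht0 : ∑ i, B i i = 0 := by
    simpa [Matrix.trace, Matrix.diag] using htr
  -- evaluate the contracted sum
  have heval : ∑ q : (Fin D × Fin D) × (Fin D × Fin D),
      (B q.1.1 q.1.2 * (starRingEnd ℂ) (B q.2.1 q.2.2)) *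
        T4 μ e q.1.2 q.2.1 q.1.1 q.2.2
      = (kap μ e hD / 2) * ∑ i, ∑ j, B i j * (starRingEnd ℂ) (B i j) := by
    have hT : ∀ q : (Fin D × Fin D) × (Fin D × Fin D),
        (B q.1.1 q.1.2 * (starRingEnd ℂ) (B q.2.1 q.2.2)) *
          T4 μ e q.1.2 q.2.1 q.1.1 q.2.2
        = (kap μ e hD / 2) *
            ((if q.1.2 = q.1.1 then (1:ℂ) else 0) * (if q.2.1 = q.2.2 then (1:ℂ) else 0) *
              (B q.1.1 q.1.2 * (starRingEnd ℂ) (B q.2.1 q.2.2)) +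
             (if q.1.2 = q.2.2 then (1:ℂ) else 0) * (if q.2.1 = q.1.1 then (1:ℂ) else 0) *
              (B q.1.1 q.1.2 * (starRingEnd ℂ) (B q.2.1 q.2.2))) := by
      intro q
      rw [T4_struct μ e hD q.1.2 q.2.1 q.1.1 q.2.2]
      ring
    rw [Finset.sum_congr rfl fun q _ => hT q, ← Finset.mul_sum]
    congr 1
    rw [Finset.sum_add_distrib]
    have hS1 : ∑ q : (Fin D × Fin D) × (Fin D × Fin D),
        (if q.1.2 = q.1.1 then (1:ℂ) else 0) * (if q.2.1 = q.2.2 then (1:ℂ) else 0) *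
          (B q.1.1 q.1.2 * (starRingEnd ℂ) (B q.2.1 q.2.2)) = 0 := by
      rw [Fintype.sum_prod_type]
      have inner : ∀ p : Fin D × Fin D, ∑ q : Fin D × Fin D,
          (if p.2 = p.1 then (1:ℂ) else 0) * (if q.1 = q.2 then (1:ℂ) else 0) *
            (B p.1 p.2 * (starRingEnd ℂ) (B q.1 q.2))
          = (if p.2 = p.1 then (1:ℂ) else 0) * B p.1 p.2 *
              (starRingEnd ℂ) (∑ k, B k k) := by
        intro p
        rw [map_sum, Finset.mul_sum, Fintype.sum_prod_type]
        refine Finset.sum_congr rfl fun k _ => ?_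
        simp [Finset.sum_ite_eq', mul_comm, mul_assoc, mul_left_comm]
      rw [Finset.sum_congr rfl fun p _ => inner p, ht0, map_zero]
      simp
    have hS2 : ∑ q : (Fin D × Fin D) × (Fin D × Fin D),
        (if q.1.2 = q.2.2 then (1:ℂ) else 0) * (if q.2.1 = q.1.1 then (1:ℂ) else 0) *
          (B q.1.1 q.1.2 * (starRingEnd ℂ) (B q.2.1 q.2.2))
        = ∑ i, ∑ j, B i j * (starRingEnd ℂ) (B i j) := by
      rw [Fintype.sum_prod_type]
      have inner : ∀ p : Fin D × Fin D, ∑ q : Fin D × Fin D,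
          (if p.2 = q.2 then (1:ℂ) else 0) * (if q.1 = p.1 then (1:ℂ) else 0) *
            (B p.1 p.2 * (starRingEnd ℂ) (B q.1 q.2))
          = B p.1 p.2 * (starRingEnd ℂ) (B p.1 p.2) := by
        intro p
        rw [Fintype.sum_prod_type]
        rw [Finset.sum_eq_single p.1]
        · rw [Finset.sum_eq_single p.2]
          · simp
          · intro l _ hl; simp [Ne.symm hl]
          · intro h; exact absurd (Finset.mem_univ p.2) h
        · intro k _ hk; simp [hk]
        · intro h; exact absurd (Finset.mem_univ p.1) h
      rw [Finset.sum_congr rfl fun p _ => inner p, Fintype.sum_prod_type]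
    rw [hS1, hS2, zero_add]
  -- Frobenius norm as a real number
  have hfrob : ∑ i, ∑ j, B i j * (starRingEnd ℂ) (B i j)
      = ((∑ i, ∑ j, ‖B i j‖ ^ 2 : ℝ) : ℂ) := by
    push_cast
    refine Finset.sum_congr rfl fun i _ => Finset.sum_congr rfl fun j _ => ?_
    rw [Complex.mul_conj, Complex.normSq_eq_norm_sq]
    push_cast; ring
  -- kappa value
  have hk := kap_val μ e hD he
  have h1 : (D:ℂ) ≠ 0 := Nat.cast_ne_zero.mpr (by omega)
  have h2 : ((D:ℂ) + 1) ≠ 0 := by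
    have h3 : ((D + 1 : ℕ) : ℂ) ≠ 0 := Nat.cast_ne_zero.mpr (by omega)
    push_cast at h3
    exact h3
  have hD1 : ((D:ℂ) * ((D:ℂ) + 1)) ≠ 0 := mul_ne_zero h1 h2
  -- assemble
  have key : (∫ U : Matrix.unitaryGroup (Fin D) ℂ,
      ((‖star e ⬝ᵥ (((U : Matrix (Fin D) (Fin D) ℂ)ᴴ * B *
        (U : Matrix (Fin D) (Fin D) ℂ)) *ᵥ e)‖ ^ 2 : ℝ) : ℂ) ∂μ)
      = (((∑ i, ∑ j, ‖B i j‖ ^ 2) / (D * (D + 1)) : ℝ) : ℂ) := by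
    simp only [hcomb]
    rw [hint, heval, hfrob]
    push_cast
    rw [eq_div_iff hD1]
    linear_combination (∑ i, ∑ j, ((‖B i j‖ : ℂ)) ^ 2) * hk
  have cast2 : ∫ U : Matrix.unitaryGroup (Fin D) ℂ,
      ((‖star e ⬝ᵥ (((U : Matrix (Fin D) (Fin D) ℂ)ᴴ * B *
        (U : Matrix (Fin D) (Fin D) ℂ)) *ᵥ e)‖ ^ 2 : ℝ) : ℂ) ∂μ
      = ((∫ U : Matrix.unitaryGroup (Fin D) ℂ,
          ‖star e ⬝ᵥ (((U : Matrix (Fin D) (Fin D) ℂ)ᴴ * B *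
            (U : Matrix (Fin D) (Fin D) ℂ)) *ᵥ e)‖ ^ 2 ∂μ : ℝ) : ℂ) := integral_ofReal
  rw [cast2] at key
  exact_mod_cast key
end

section
/- Let n ≥ 1, N = 2n, and let Γ, Γ' : Matrix (Fin N) (Fin N) ℝ be antisymmetric matrices (Γᵀ = −Γ, Γ'ᵀ = −Γ') with Γ * Γᵀ ≤ 1 and Γ' * Γ'ᵀ ≤ 1 in the Loewner order. Let A ⊆ Fin N with |A| = 2m, and suppose Γ'_{ab} = Γ_{ab} whenever a ∉ A and b ∉ A. Then | (n − ½‖Γ‖_F²) − (n − ½‖Γ'‖_F²) | ≤ 4m, where ‖Γ‖_F² = ∑_{a,b} Γ_{ab}². (Consequently a unitary gate supported on m fermionic modes changes FAF₁(ρ) = n − ½‖Γ_ρ‖_F² by at most 4m, so preparing a state with FAF₁ ≥ c·n from a Gaussian state using Gaussian unitaries interleaved with t non-Gaussian gates on at most m modes requires t ≥ (c/4)·(n/m).) -/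
open Finset Matrix

/-- Local change bound for the antiflatness: if two antisymmetric covariance
matrices with singular values at most one agree on all entries with both
indices outside a set `A` of `2m` Majorana indices, then
`|FAF₁(Γ) − FAF₁(Γ')| ≤ 4m`, where `FAF₁(Γ) = n − ½‖Γ‖_F²`. -/
theorem stmt_16 (n m : ℕ) (hn : 1 ≤ n)
    (Γ Γ' : Matrix (Fin (2 * n)) (Fin (2 * n)) ℝ)
    (hΓanti : Γᵀ = -Γ) (hΓ'anti : Γ'ᵀ = -Γ')
    (hΓ : ((1 : Matrix (Fin (2 * n)) (Fin (2 * n)) ℝ) - Γ * Γᵀ).PosSemidef)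
    (hΓ' : ((1 : Matrix (Fin (2 * n)) (Fin (2 * n)) ℝ) - Γ' * Γ'ᵀ).PosSemidef)
    (A : Finset (Fin (2 * n))) (hA : A.card = 2 * m)
    (heq : ∀ a b, a ∉ A → b ∉ A → Γ' a b = Γ a b) :
    |((n : ℝ) - (1 / 2) * ∑ a, ∑ b, (Γ a b) ^ 2) -
        ((n : ℝ) - (1 / 2) * ∑ a, ∑ b, (Γ' a b) ^ 2)| ≤ 4 * m := by
  -- diagonal nonneg
  have diag : ∀ (M : Matrix (Fin (2*n)) (Fin (2*n)) ℝ), M.PosSemidef → ∀ a, 0 ≤ M a a := by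
    intro M h a
    have := h.diag_nonneg (i := a)
    simpa [dotProduct, mulVec, Pi.single_apply] using this
  have hrow : ∀ (M : Matrix (Fin (2*n)) (Fin (2*n)) ℝ),
      ((1 : Matrix (Fin (2*n)) (Fin (2*n)) ℝ) - M * Mᵀ).PosSemidef →
      ∀ a, ∑ b, (M a b)^2 ≤ 1 := by
    intro M h a
    have h0 := diag _ h a
    have : ((1 : Matrix (Fin (2*n)) (Fin (2*n)) ℝ) - M * Mᵀ) a a
        = 1 - ∑ b, (M a b)^2 := by
      simp [Matrix.sub_apply, Matrix.mul_apply, Matrix.transpose_apply, sq]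
    linarith [this ▸ h0]
  have key : ∀ (M : Matrix (Fin (2*n)) (Fin (2*n)) ℝ), Mᵀ = -M →
      (∀ a, ∑ b, (M a b)^2 ≤ 1) →
      ∑ a, ∑ b, (if a ∈ A ∨ b ∈ A then (M a b)^2 else 0) ≤ 4 * m := by
    intro M hanti hr
    have hsq : ∀ a b, (M a b)^2 = (M b a)^2 := by
      intro a b
      have : M b a = -M a b := by
        have := congrFun (congrFun hanti a) b
        simpa [Matrix.transpose_apply] using this
      rw [this]; ring
    have step1 : ∑ a, ∑ b, (if a ∈ A ∨ b ∈ A then (M a b)^2 else 0)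
        ≤ ∑ a, ∑ b, ((if a ∈ A then (M a b)^2 else 0) + (if b ∈ A then (M a b)^2 else 0)) := by
      refine Finset.sum_le_sum fun a _ => Finset.sum_le_sum fun b _ => ?_
      by_cases ha : a ∈ A <;> by_cases hb : b ∈ A <;>
        simp [ha, hb] <;> positivity
    have s1 : ∑ a, ∑ b, (if a ∈ A then (M a b)^2 else 0) ≤ 2 * m := by
      calc ∑ a, ∑ b, (if a ∈ A then (M a b)^2 else 0)
          = ∑ a ∈ A, ∑ b, (M a b)^2 := by
            rw [show (∑ a, ∑ b, (if a ∈ A then (M a b)^2 else 0))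
                = ∑ a, (if a ∈ A then ∑ b, (M a b)^2 else 0) from
              Finset.sum_congr rfl fun a _ => by split <;> simp]
            rw [Finset.sum_ite_mem]
            simp
        _ ≤ ∑ a ∈ A, (1:ℝ) := Finset.sum_le_sum fun a _ => hr a
        _ = 2 * m := by simp [hA]
    have s2 : ∑ a, ∑ b, (if b ∈ A then (M a b)^2 else 0) ≤ 2 * m := by
      rw [Finset.sum_comm]
      calc ∑ b, ∑ a, (if b ∈ A then (M a b)^2 else 0)
          = ∑ b ∈ A, ∑ a, (M a b)^2 := by
            rw [show (∑ b, ∑ a, (if b ∈ A then (M a b)^2 else 0))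
                = ∑ b, (if b ∈ A then ∑ a, (M a b)^2 else 0) from
              Finset.sum_congr rfl fun b _ => by split <;> simp]
            rw [Finset.sum_ite_mem]
            simp
        _ = ∑ b ∈ A, ∑ a, (M b a)^2 := by
            refine Finset.sum_congr rfl fun b _ => Finset.sum_congr rfl fun a _ => hsq a b
        _ ≤ ∑ b ∈ A, (1:ℝ) := Finset.sum_le_sum fun b _ => hr b
        _ = 2 * m := by simp [hA]
    calc ∑ a, ∑ b, (if a ∈ A ∨ b ∈ A then (M a b)^2 else 0)
        ≤ ∑ a, ∑ b, ((if a ∈ A then (M a b)^2 else 0) + (if b ∈ A then (M a b)^2 else 0)) := step1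
      _ = (∑ a, ∑ b, (if a ∈ A then (M a b)^2 else 0))
          + ∑ a, ∑ b, (if b ∈ A then (M a b)^2 else 0) := by
            simp [Finset.sum_add_distrib]
      _ ≤ 2 * m + 2 * m := add_le_add s1 s2
      _ = 4 * m := by ring
  set D : ℝ := ∑ a, ∑ b, ((Γ' a b)^2 - (Γ a b)^2) with hD
  have hDeq : ((n : ℝ) - (1 / 2) * ∑ a, ∑ b, (Γ a b) ^ 2) -
      ((n : ℝ) - (1 / 2) * ∑ a, ∑ b, (Γ' a b) ^ 2) = (1/2) * D := by
    simp only [hD, Finset.sum_sub_distrib]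
    ring
  have hDbound : |D| ≤ 8 * m := by
    have habs : |D| ≤ ∑ a, ∑ b, |(Γ' a b)^2 - (Γ a b)^2| := by
      refine (Finset.abs_sum_le_sum_abs _ _).trans
        (Finset.sum_le_sum fun a _ => Finset.abs_sum_le_sum_abs _ _)
    have hpt : ∀ a b, |(Γ' a b)^2 - (Γ a b)^2|
        ≤ (if a ∈ A ∨ b ∈ A then (Γ a b)^2 else 0) + (if a ∈ A ∨ b ∈ A then (Γ' a b)^2 else 0) := by
      intro a b
      by_cases h : a ∈ A ∨ b ∈ A
      · simp only [h, if_pos]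
        have := abs_sub ((Γ' a b)^2) ((Γ a b)^2)
        have h1 : |(Γ' a b)^2| = (Γ' a b)^2 := abs_of_nonneg (by positivity)
        have h2 : |(Γ a b)^2| = (Γ a b)^2 := abs_of_nonneg (by positivity)
        calc |(Γ' a b)^2 - (Γ a b)^2| ≤ |(Γ' a b)^2| + |(Γ a b)^2| := abs_sub _ _
          _ = (Γ a b)^2 + (Γ' a b)^2 := by rw [h1, h2]; ring
      · push_neg at h
        rw [heq a b h.1 h.2]
        simp [h]
    calc |D| ≤ ∑ a, ∑ b, |(Γ' a b)^2 - (Γ a b)^2| := habs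
      _ ≤ ∑ a, ∑ b, ((if a ∈ A ∨ b ∈ A then (Γ a b)^2 else 0) + (if a ∈ A ∨ b ∈ A then (Γ' a b)^2 else 0)) :=
          Finset.sum_le_sum fun a _ => Finset.sum_le_sum fun b _ => hpt a b
      _ = (∑ a, ∑ b, (if a ∈ A ∨ b ∈ A then (Γ a b)^2 else 0))
          + ∑ a, ∑ b, (if a ∈ A ∨ b ∈ A then (Γ' a b)^2 else 0) := by
            simp [Finset.sum_add_distrib]
      _ ≤ 4 * m + 4 * m := add_le_add (key Γ hΓanti (hrow Γ hΓ)) (key Γ' hΓ'anti (hrow Γ' hΓ'))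
      _ = 8 * m := by ring
  rw [hDeq, abs_mul]
  rw [abs_of_nonneg (by norm_num : (0:ℝ) ≤ 1/2)]
  linarith
end
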